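/- arXiv:2010.06586 — 2 statements merged into one kernel-verified Lean document; each statement's English description precedes it below -/
import Mathlib

section
/- For every positive integer n, the 6×6 determinant det_{0≤i,j≤5} binom(i+j+n, i-j+n) equals (2^5/(5·7!·9!))·(n+1)(n+2)^2(n+3)^3(n+4)^2(n+5)(2n+3)(2n+5)^2(2n+7)^2(2n+9). -/
open Finset

def binom (a : ℕ) (b : ℤ) : ℕ := if 0 ≤ b then a.choose b.toNat else 0

lemma cast_choose_prod (m k : ℕ) :
    (m.choose k : ℚ) = (∏ t ∈ range k, ((m : ℚ) - t)) / k.factorial := by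
  rcases le_or_gt k m with h | h
  · have h1 : ((m.descFactorial k : ℕ) : ℚ) = ∏ t ∈ range k, ((m : ℚ) - t) := by
      rw [Nat.descFactorial_eq_prod_range]
      push_cast
      refine Finset.prod_congr rfl ?_
      intro t ht
      have ht' : t ≤ m := le_trans (le_of_lt (mem_range.mp ht)) h
      rw [Nat.cast_sub ht']
    rw [eq_div_iff (by exact_mod_cast Nat.factorial_ne_zero k), ← h1,
      Nat.descFactorial_eq_factorial_mul_choose]
    push_cast; ring
  · rw [Nat.choose_eq_zero_of_lt h,
      Finset.prod_eq_zero (mem_range.mpr h) (by simp)]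
    simp

lemma binom_eq (n i j : ℕ) :
    binom (i + j + n) ((i : ℤ) - (j : ℤ) + (n : ℤ)) = (i + j + n).choose (2 * j) := by
  unfold binom
  rcases le_or_gt j (i + n) with h | h
  · rw [if_pos (by omega)]
    have ht : ((i:ℤ) - j + n).toNat = i + j + n - 2 * j := by omega
    rw [ht, Nat.choose_symm (by omega)]
  · rw [if_neg (by omega), Nat.choose_eq_zero_of_lt (by omega)]

set_option maxRecDepth 100000 in
set_option maxHeartbeats 4000000 in
theorem binom_det_6 (n : ℕ) (hn : 0 < n) :
    Matrix.det (Matrix.of (fun i j : Fin 6 =>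
        (binom ((i : ℕ) + j + n) ((i : ℤ) - (j : ℤ) + n) : ℚ))) =
      (2 ^ 5 / (5 * Nat.factorial 7 * Nat.factorial 9 : ℚ)) *
        ((n + 1) * (n + 2) ^ 2 * (n + 3) ^ 3 * (n + 4) ^ 2 * (n + 5) *
          (2 * n + 3) * (2 * n + 5) ^ 2 * (2 * n + 7) ^ 2 * (2 * n + 9)) := by
  have hM : (Matrix.of (fun i j : Fin 6 =>
        (binom ((i : ℕ) + j + n) ((i : ℤ) - (j : ℤ) + n) : ℚ)))
      = Matrix.of (fun i j : Fin 6 =>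
        ((((i : ℕ) + (j : ℕ) + n).choose (2 * (j : ℕ)) : ℕ) : ℚ)) := by
    ext i j
    simp only [Matrix.of_apply]
    exact_mod_cast congrArg (Nat.cast : ℕ → ℚ) (binom_eq n i j)
  rw [hM]
  simp [Matrix.det_succ_row_zero, Fin.sum_univ_succ, Fin.succAbove]
  simp only [cast_choose_prod, Finset.prod_range_succ, Finset.prod_range_zero]
  push_cast
  norm_num [Nat.factorial]
  ring
end

section
/- For every positive integer n and nonnegative integer r, the Hankel determinant det_{0≤i,j≤n-1}(C_{i+j+r}) is a positive integer (in particular nonzero). -/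
open Finset

/-- Number of ±1-step lattice paths of length `s` from height `x` to height `t`
staying nonnegative. -/
def cpath : ℕ → ℕ → ℕ → ℕ
  | 0, x, t => if x = t then 1 else 0
  | s+1, x, t => (if x = 0 then 0 else cpath s (x-1) t) + cpath s (x+1) t

lemma cpath_succ (s x t : ℕ) :
    cpath (s+1) x t = (if x = 0 then 0 else cpath s (x-1) t) + cpath s (x+1) t := rfl

lemma cpath_succ' (s : ℕ) : ∀ x t, cpath (s+1) x t
    = (if t = 0 then 0 else cpath s x (t-1)) + cpath s x (t+1) := by
  induction s with
  | zero =>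
    intro x t
    simp only [cpath]
    split_ifs <;> omega
  | succ s IH =>
    intro x t
    by_cases hx : x = 0
    · subst hx
      rw [show cpath (s+1+1) 0 t = cpath (s+1) 1 t from by rw [cpath_succ]; simp,
          IH 1 t]
      congr 1
      · by_cases ht : t = 0
        · simp [ht]
        · rw [if_neg ht, if_neg ht,
            show cpath (s+1) 0 (t-1) = cpath s 1 (t-1) from by rw [cpath_succ]; simp]
      · rw [show cpath (s+1) 0 (t+1) = cpath s 1 (t+1) from by rw [cpath_succ]; simp]
    · obtain ⟨y, rfl⟩ : ∃ y, x = y + 1 := ⟨x-1, by omega⟩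
      rw [show cpath (s+1+1) (y+1) t = cpath (s+1) y t + cpath (s+1) (y+2) t from by
            rw [cpath_succ]; simp,
          IH y t, IH (y+2) t,
          show cpath (s+1) (y+1) (t+1) = cpath s y (t+1) + cpath s (y+2) (t+1) from by
            rw [cpath_succ]; simp]
      by_cases ht : t = 0
      · simp [ht]
      · rw [if_neg ht, if_neg ht, if_neg ht,
          show cpath (s+1) (y+1) (t-1) = cpath s y (t-1) + cpath s (y+2) (t-1) from by
            rw [cpath_succ]; simp]
        ring

lemma cpath_symm (s : ℕ) : ∀ x t, cpath s x t = cpath s t x := by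
  induction s with
  | zero => intro x t; simp only [cpath]; split_ifs <;> omega
  | succ s IH =>
    intro x t
    rw [cpath_succ, cpath_succ' s t x]
    by_cases hx : x = 0
    · simp [hx, IH]
    · rw [if_neg hx, if_neg hx, IH (x-1) t, IH (x+1) t]

lemma cpath_eq_zero (s : ℕ) : ∀ x t, x + s < t → cpath s x t = 0 := by
  induction s with
  | zero => intro x t h; simp only [cpath]; rw [if_neg (by omega)]
  | succ s IH =>
    intro x t h
    rw [cpath_succ, IH (x+1) t (by omega)]
    split_ifs with hx
    · rfl
    · rw [IH (x-1) t (by omega)]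

lemma cpath_up (s : ℕ) : ∀ x, cpath s x (x + s) = 1 := by
  induction s with
  | zero => intro x; simp [cpath]
  | succ s IH =>
    intro x
    rw [cpath_succ]
    have h1 : cpath s (x+1) (x + (s+1)) = 1 := by
      rw [show x + (s+1) = (x+1) + s from by omega, IH]
    rw [h1]
    split_ifs with hx
    · rfl
    · rw [cpath_eq_zero s (x-1) (x+(s+1)) (by omega)]

lemma cpath_split (b t : ℕ) : ∀ a x K, x + a < K →
    cpath (a + b) x t = ∑ h ∈ Finset.range K, cpath a x h * cpath b h t := by
  intro a
  induction a with
  | zero =>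
    intro x K hK
    have : ∀ h ∈ Finset.range K, cpath 0 x h * cpath b h t
        = if x = h then cpath b h t else 0 := by
      intro h _
      simp only [cpath]
      split_ifs <;> simp
    rw [zero_add, Finset.sum_congr rfl this, Finset.sum_ite_eq,
      if_pos (Finset.mem_range.mpr (by omega))]
  | succ a IH =>
    intro x K hK
    have hs : ∀ h ∈ Finset.range K, cpath (a+1) x h * cpath b h t
        = (if x = 0 then 0 else cpath a (x-1) h * cpath b h t)
          + cpath a (x+1) h * cpath b h t := by
      intro h _
      rw [cpath_succ]
      split_ifs <;> ring
    rw [Finset.sum_congr rfl hs, Finset.sum_add_distrib]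
    by_cases hx : x = 0
    · subst hx
      rw [show a + 1 + b = (a + b) + 1 from by omega, cpath_succ, if_pos rfl, zero_add,
        IH 1 K (by omega)]
      simp
    · simp only [if_neg hx]
      rw [show a + 1 + b = (a + b) + 1 from by omega, cpath_succ, if_neg hx,
        IH (x-1) K (by omega), IH (x+1) K (by omega)]

lemma cpath_zero (x t : ℕ) : cpath 0 x t = if x = t then 1 else 0 := rfl

/-- Signed closed form for ballot numbers. -/
def hb (s h : ℕ) : ℤ :=
  if h ≤ s ∧ (s - h) % 2 = 0 then
    ((s.choose ((s-h)/2) : ℤ) - (s.choose ((s+h)/2 + 1) : ℤ)) else 0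

lemma hb_eq (s h k : ℕ) (hs : s = h + 2*k) :
    hb s h = (s.choose k : ℤ) - (s.choose (s - k + 1) : ℤ) := by
  have h1 : (s-h)/2 = k := by omega
  have h2 : (s+h)/2 + 1 = s - k + 1 := by omega
  rw [hb, if_pos (by omega), h1, h2]

lemma hb_eq_zero (s h : ℕ) (H : ¬(h ≤ s ∧ (s-h) % 2 = 0)) : hb s h = 0 := by
  rw [hb, if_neg H]

lemma hb_rec (s t : ℕ) :
    hb (s+1) t = (if t = 0 then 0 else hb s (t-1)) + hb s (t+1) := by
  rcases eq_or_ne t 0 with rfl | ht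
  · rw [if_pos rfl, zero_add]
    by_cases h2 : s % 2 = 1
    · obtain ⟨u, rfl⟩ : ∃ u, s = 2*u+1 := ⟨s/2, by omega⟩
      rw [hb_eq (2*u+1+1) 0 (u+1) (by omega), hb_eq (2*u+1) 1 u (by omega),
        show 2*u+1+1 - (u+1) + 1 = u+2 from by omega,
        show 2*u+1 - u + 1 = u+2 from by omega,
        show 2*u+1+1 = (2*u+1)+1 from rfl,
        Nat.choose_succ_succ (2*u+1) u, Nat.choose_succ_succ (2*u+1) (u+1)]
      push_cast
      ring
    · rw [hb_eq_zero _ _ (by omega), hb_eq_zero _ _ (by omega)]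
  · rw [if_neg ht]
    by_cases hpar : t ≤ s+1 ∧ (s+1-t) % 2 = 0
    · obtain ⟨k, hk⟩ : ∃ k, s + 1 = t + 2*k := ⟨(s+1-t)/2, by omega⟩
      rcases eq_or_ne k 0 with rfl | hk0
      · -- t = s+1
        rw [hb_eq (s+1) t 0 (by omega), hb_eq s (t-1) 0 (by omega),
          hb_eq_zero s (t+1) (by omega)]
        simp [Nat.choose_eq_zero_of_lt, Nat.lt_succ_self,
          show s + 1 - 0 + 1 = s + 2 from by omega, show s - 0 + 1 = s + 1 from by omega,
          Nat.choose_eq_zero_of_lt (Nat.lt_succ_self s),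
          Nat.choose_eq_zero_of_lt (show s + 1 < s + 2 from by omega)]
      · obtain ⟨j, rfl⟩ : ∃ j, k = j + 1 := ⟨k-1, by omega⟩
        rw [hb_eq (s+1) t (j+1) (by omega), hb_eq s (t-1) (j+1) (by omega),
          hb_eq s (t+1) j (by omega),
          show s + 1 - (j+1) + 1 = (s - (j+1) + 1) + 1 from by omega,
          show s - j + 1 = (s - (j+1) + 1) + 1 from by omega,
          Nat.choose_succ_succ s j, Nat.choose_succ_succ s (s - (j+1) + 1)]
        push_cast
        ring
    · rw [hb_eq_zero _ _ (by omega), hb_eq_zero _ _ (by omega),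
        hb_eq_zero _ _ (by omega)]
      simp

lemma cpath_eq_hb : ∀ s h, (cpath s 0 h : ℤ) = hb s h := by
  intro s
  induction s with
  | zero =>
    intro h
    rcases eq_or_ne h 0 with rfl | hh
    · rw [cpath_zero, if_pos rfl, hb_eq 0 0 0 (by omega)]
      simp
    · rw [cpath_zero, if_neg (by omega), hb_eq_zero _ _ (by omega)]
      simp
  | succ s IH =>
    intro h
    rw [cpath_succ', hb_rec]
    rcases eq_or_ne h 0 with rfl | hh
    · simp [IH]
    · rw [if_neg hh, if_neg hh]
      push_cast
      rw [IH, IH]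

lemma cpath_catalan (m : ℕ) : (cpath (2*m) 0 0 : ℤ) = catalan m := by
  rw [cpath_eq_hb, hb_eq (2*m) 0 m (by omega), show 2*m - m + 1 = m + 1 from by omega]
  have key : ((2*m).choose (m+1) : ℤ) * (m+1) = (2*m).choose m * m := by
    have := Nat.choose_succ_right_eq (2*m) m
    rw [show 2*m - m = m from by omega] at this
    exact_mod_cast this
  have hc : ((m:ℤ)+1) * catalan m = (2*m).choose m := by
    have := succ_mul_catalan_eq_centralBinom m
    rw [Nat.centralBinom] at this
    exact_mod_cast this
  apply mul_left_cancel₀ (show ((m:ℤ)+1) ≠ 0 from by positivity)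
  rw [hc]
  linear_combination -key

open Matrix

lemma cpath_sum (i j r K : ℕ) (h : 2*i + r < K) :
    catalan (i + j + r) = ∑ h ∈ Finset.range K, cpath (2*i+r) 0 h * cpath (2*j+r) 0 h := by
  have h0 : catalan (i+j+r) = cpath (2*(i+j+r)) 0 0 := by
    have := cpath_catalan (i+j+r); exact_mod_cast this.symm
  rw [h0, show 2*(i+j+r) = (2*i+r) + (2*j+r) from by ring, cpath_split _ _ _ _ K (by omega)]
  exact Finset.sum_congr rfl fun h _ => by rw [cpath_symm (2*j+r) h 0]

theorem hankel_catalan_pos (n r : ℕ) (hn : 0 < n) :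
    0 < Matrix.det (Matrix.of (fun i j : Fin n => (catalan ((i : ℕ) + j + r) : ℤ))) := by
  set K := 2*n + r with hKdef
  set A : Matrix (Fin n) (Fin n) ℤ :=
    Matrix.of (fun i j : Fin n => (catalan ((i : ℕ) + j + r) : ℤ)) with hA
  set G : Matrix (Fin n) (Fin K) ℝ :=
    Matrix.of (fun i k => (cpath (2*(i:ℕ)+r) 0 (k:ℕ) : ℝ)) with hG
  have hH : A.map (Int.castRingHom ℝ) = G * Gᵀ := by
    ext i j
    simp only [Matrix.map_apply, Matrix.mul_apply, Matrix.transpose_apply, hA, hG,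
      Matrix.of_apply, Int.coe_castRingHom]
    have hsum := cpath_sum i j r K (by have := i.isLt; omega)
    rw [← Fin.sum_univ_eq_sum_range
      (fun k => cpath (2*(i:ℕ)+r) 0 k * cpath (2*(j:ℕ)+r) 0 k) K] at hsum
    exact_mod_cast congrArg (fun m : ℕ => (m : ℝ)) hsum
  have hMdiag : ∀ i : Fin n, cpath (2*(i:ℕ)+r) 0 (2*(i:ℕ)+r) = 1 := fun i => by
    have := cpath_up (2*(i:ℕ)+r) 0; simpa using this
  set M : Matrix (Fin n) (Fin n) ℝ :=
    Matrix.of (fun i j : Fin n => G i ⟨2*(j:ℕ)+r, by have := j.isLt; omega⟩) with hM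
  have hMtri : M.BlockTriangular OrderDual.toDual := by
    intro i j hij
    have hji : i < j := hij
    have hv : (i:ℕ) < (j:ℕ) := hji
    simp only [hM, Matrix.of_apply, hG]
    rw [cpath_eq_zero _ _ _ (by omega)]
    simp
  have hdetM : M.det = 1 := by
    rw [Matrix.det_of_lowerTriangular M hMtri]
    apply Finset.prod_eq_one
    intro i _
    simp [hM, hG, hMdiag i]
  have hGinj : ∀ x : Fin n → ℝ, Matrix.vecMul x G = 0 → x = 0 := by
    intro x hx
    have hxM : Matrix.vecMul x M = 0 := by
      ext j
      have := congrFun hx ⟨2*(j:ℕ)+r, by have := j.isLt; omega⟩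
      simpa [Matrix.vecMul, dotProduct, hM, hG] using this
    have hu : IsUnit M.det := by rw [hdetM]; exact isUnit_one
    calc x = Matrix.vecMul x (1 : Matrix (Fin n) (Fin n) ℝ) := (Matrix.vecMul_one x).symm
      _ = Matrix.vecMul x (M * M⁻¹) := by rw [Matrix.mul_nonsing_inv M hu]
      _ = Matrix.vecMul (Matrix.vecMul x M) M⁻¹ := (Matrix.vecMul_vecMul x M M⁻¹).symm
      _ = 0 := by rw [hxM, Matrix.zero_vecMul]
  have hpd : (G * Gᵀ).PosDef := by
    rw [Matrix.posDef_iff_dotProduct_mulVec]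
    constructor
    · have h := Matrix.isHermitian_mul_conjTranspose_self G
      rwa [Matrix.conjTranspose_eq_transpose_of_trivial] at h
    · intro x hx
      have hw : Matrix.vecMul x G ≠ 0 := fun h => hx (hGinj x h)
      have hrw : dotProduct (star x) ((G * Gᵀ) *ᵥ x)
          = dotProduct (Matrix.vecMul x G) (Matrix.vecMul x G) := by
        rw [star_trivial, ← Matrix.mulVec_mulVec, dotProduct_mulVec,
          Matrix.mulVec_transpose]
      rw [hrw]
      have h1 : 0 ≤ dotProduct (Matrix.vecMul x G) (Matrix.vecMul x G) :=
        Finset.sum_nonneg fun i _ => mul_self_nonneg _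
      rcases h1.lt_or_eq with h | h
      · exact h
      · exact absurd (dotProduct_self_eq_zero.mp h.symm) hw
  have hdet : (0:ℝ) < ((A.det : ℤ) : ℝ) := by
    have hcast := RingHom.map_det (Int.castRingHom ℝ) A
    
    rw [show ((A.det : ℤ) : ℝ) = ((Int.castRingHom ℝ) A.det) from rfl, hcast, RingHom.mapMatrix_apply, hH]
    exact hpd.det_pos
  exact_mod_cast hdet
end
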